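/- Let α ≥ 2. Then (1/2)·C(α−1) ≤ (C(α)/(1+2α))·(1 + 2/√α), where C(β) = ∫₀^∞ t^β / sinh t dt. -/

import Mathlib

open MeasureTheory Filter Real

/-- `C(β) = ∫₀^∞ t^β / sinh t dt`. -/
noncomputable def Cconst (β : ℝ) : ℝ :=
  ∫ t in Set.Ioi (0:ℝ), t ^ β / Real.sinh t

lemma aux_int {β c : ℝ} (hβ : 0 < β) (hc : 0 < c) :
    IntegrableOn (fun t : ℝ => t ^ β * Real.exp (-(c * t))) (Set.Ioi 0) := by
  have h := integrableOn_rpow_mul_exp_neg_mul_rpow (p := 1) (s := β) (b := c)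
    (by linarith) one_pos hc
  simpa [Real.rpow_one, neg_mul] using h

lemma sinh_series {β t : ℝ} (ht : 0 < t) :
    t ^ β / Real.sinh t = ∑' n : ℕ, 2 * t ^ β * Real.exp (-((2 * n + 1) * t)) := by
  have h1 : Real.exp (-(2 * t)) < 1 := Real.exp_lt_one_iff.mpr (by linarith)
  have h2 : (0:ℝ) < 1 - Real.exp (-(2 * t)) := by linarith
  have hterm : ∀ n : ℕ, 2 * t ^ β * Real.exp (-((2 * n + 1) * t))
      = (2 * t ^ β * Real.exp (-t)) * Real.exp (-(2 * t)) ^ n := by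
    intro n
    have harg : -((2 * (n:ℝ) + 1) * t) = -t + n * -(2 * t) := by ring
    rw [← Real.exp_nat_mul, mul_assoc (2 * t ^ β), ← Real.exp_add, harg]
  rw [tsum_congr hterm, tsum_mul_left,
    tsum_geometric_of_lt_one (Real.exp_nonneg _) h1]
  have he2 : Real.exp (-(2 * t)) = Real.exp (-t) * Real.exp (-t) := by
    rw [← Real.exp_add]; ring_nf
  have hsinh : 0 < Real.sinh t := Real.sinh_pos_iff.mpr ht
  have hprod : Real.exp (-t) * Real.exp t = 1 := by
    rw [← Real.exp_add]; simp
  have h2ne : 1 - Real.exp (-t) * Real.exp (-t) ≠ 0 := by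
    rw [he2] at h2; exact ne_of_gt h2
  have hsne : Real.exp t - Real.exp (-t) ≠ 0 := by
    rw [Real.sinh_eq] at hsinh
    intro h; rw [h] at hsinh; norm_num at hsinh
  rw [Real.sinh_eq, he2]
  rw [← div_eq_mul_inv, div_eq_div_iff (by simpa using hsne) h2ne]
  linear_combination (-t ^ β) * hprod


lemma summable_basel : Summable (fun n : ℕ => ((1:ℝ) / (n + 1)) ^ (2:ℕ)) := by
  have h0 : Summable (fun n : ℕ => (1:ℝ) / (n:ℝ) ^ (2:ℕ)) :=
    Real.summable_one_div_nat_pow.mpr (by norm_num)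
  have := (summable_nat_add_iff 1).mpr h0
  apply this.congr
  intro n
  push_cast
  rw [div_pow, one_pow]

lemma summable_odd {s : ℝ} (hs : 2 ≤ s) :
    Summable (fun n : ℕ => ((1:ℝ) / (2 * n + 1)) ^ s) := by
  have hb : Summable (fun n : ℕ => ((1:ℝ) / (n + 1)) ^ (2:ℕ)) := summable_basel
  apply Summable.of_nonneg_of_le (fun n => ?_) (fun n => ?_) hb
  · exact Real.rpow_nonneg (by positivity) _
  · have hbase0 : (0:ℝ) < 1 / (2 * n + 1) := by positivity
    have hbase1 : (1:ℝ) / (2 * n + 1) ≤ 1 := by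
      rw [div_le_one (by positivity)]; norm_num
    calc ((1:ℝ) / (2 * n + 1)) ^ s ≤ ((1:ℝ) / (2 * n + 1)) ^ (2:ℝ) :=
          Real.rpow_le_rpow_of_exponent_ge hbase0 hbase1 hs
      _ = ((1:ℝ) / (2 * n + 1)) ^ (2:ℕ) := by
          rw [← Real.rpow_natCast]; norm_num
      _ ≤ ((1:ℝ) / (n + 1)) ^ (2:ℕ) := by
          apply pow_le_pow_left₀ hbase0.le
          apply div_le_div_of_nonneg_left one_pos.le (by positivity)
          have := Nat.cast_nonneg (α := ℝ) n; linarith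

lemma Cconst_eq {β : ℝ} (hβ : 1 ≤ β) :
    Cconst β = 2 * Real.Gamma (β + 1) * ∑' n : ℕ, ((1:ℝ) / (2 * n + 1)) ^ (β + 1) := by
  have hβ0 : (0:ℝ) < β := lt_of_lt_of_le one_pos hβ
  have hval : ∀ n : ℕ, (∫ t in Set.Ioi (0:ℝ), 2 * t ^ β * Real.exp (-((2 * n + 1) * t)))
      = 2 * Real.Gamma (β + 1) * ((1:ℝ) / (2 * n + 1)) ^ (β + 1) := by
    intro n
    have hr : (0:ℝ) < 2 * n + 1 := by positivity
    have h := Real.integral_rpow_mul_exp_neg_mul_Ioi (a := β + 1) (r := (2 * n + 1 : ℝ))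
      (by linarith) hr
    simp only [add_sub_cancel_right] at h
    calc (∫ t in Set.Ioi (0:ℝ), 2 * t ^ β * Real.exp (-((2 * n + 1) * t)))
        = 2 * ∫ t in Set.Ioi (0:ℝ), t ^ β * Real.exp (-((2 * n + 1) * t)) := by
          simp_rw [mul_assoc]
          exact integral_const_mul 2 _
      _ = 2 * Real.Gamma (β + 1) * ((1:ℝ) / (2 * n + 1)) ^ (β + 1) := by
          rw [h]; ring
  have hint : ∀ n : ℕ, Integrable (fun t : ℝ => 2 * t ^ β * Real.exp (-((2 * n + 1) * t)))
      (volume.restrict (Set.Ioi 0)) := by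
    intro n
    have := (aux_int hβ0 (show (0:ℝ) < 2 * n + 1 by positivity)).const_mul 2
    apply this.congr
    filter_upwards with t
    ring
  have hsum : Summable (fun n : ℕ =>
      ∫ t in Set.Ioi (0:ℝ), ‖2 * t ^ β * Real.exp (-((2 * n + 1) * t))‖) := by
    have heq : ∀ n : ℕ, (∫ t in Set.Ioi (0:ℝ), ‖2 * t ^ β * Real.exp (-((2 * n + 1) * t))‖)
        = 2 * Real.Gamma (β + 1) * ((1:ℝ) / (2 * n + 1)) ^ (β + 1) := by
      intro n
      rw [← hval n]
      apply setIntegral_congr_fun measurableSet_Ioi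
      intro t ht
      dsimp only
      rw [Real.norm_of_nonneg]
      have ht0 : (0:ℝ) ≤ t := le_of_lt ht
      have := Real.rpow_nonneg ht0 β
      positivity
    have hs2 : Summable (fun n : ℕ =>
        2 * Real.Gamma (β + 1) * ((1:ℝ) / (2 * n + 1)) ^ (β + 1)) :=
      (summable_odd (by linarith)).mul_left _
    exact hs2.congr (fun n => (heq n).symm)
  have hswap := integral_tsum_of_summable_integral_norm hint hsum
  have hC : Cconst β = ∫ t in Set.Ioi (0:ℝ),
      ∑' n : ℕ, 2 * t ^ β * Real.exp (-((2 * n + 1) * t)) := by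
    apply setIntegral_congr_fun measurableSet_Ioi
    intro t ht
    exact sinh_series ht
  rw [hC, ← hswap, tsum_congr hval, tsum_mul_left]

lemma basel_shift : ∑' n : ℕ, ((1:ℝ) / (n + 1)) ^ (2:ℕ) = π ^ 2 / 6 := by
  have h : HasSum (fun n : ℕ => (1:ℝ) / ((n + 1 : ℕ):ℝ) ^ 2) (π ^ 2 / 6) := by
    apply (hasSum_nat_add_iff (f := fun n : ℕ => (1:ℝ)/(n:ℝ)^2) 1).mpr
    simpa using hasSum_zeta_two
  have hfe : (fun n : ℕ => (1:ℝ) / ((n + 1 : ℕ):ℝ) ^ 2) = fun n : ℕ => ((1:ℝ) / (n + 1)) ^ (2:ℕ) := by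
    funext n; push_cast; rw [div_pow, one_pow]
  rw [← hfe]
  exact h.tsum_eq

set_option maxHeartbeats 1000000 in
theorem stmt_12 (α : ℝ) (hα : 2 ≤ α) :
    (1 / 2) * Cconst (α - 1) ≤ (Cconst α / (1 + 2 * α)) * (1 + 2 / Real.sqrt α) := by
  have hα0 : (0:ℝ) < α := by linarith
  set S1 := ∑' n : ℕ, ((1:ℝ) / (2 * n + 1)) ^ α with hS1def
  set S2 := ∑' n : ℕ, ((1:ℝ) / (2 * n + 1)) ^ (α + 1) with hS2def
  have hC1 : Cconst (α - 1) = 2 * Real.Gamma α * S1 := by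
    have h := Cconst_eq (β := α - 1) (by linarith)
    rw [show α - 1 + 1 = α from by ring] at h
    exact h
  have hC2 : Cconst α = 2 * Real.Gamma (α + 1) * S2 := Cconst_eq (by linarith)
  have hΓ : 0 < Real.Gamma α := Real.Gamma_pos_of_pos hα0
  have hG1 : Real.Gamma (α + 1) = α * Real.Gamma α := Real.Gamma_add_one (ne_of_gt hα0)
  have hs0 : 0 < Real.sqrt α := Real.sqrt_pos.mpr hα0
  have hs141 : (1.41:ℝ) ≤ Real.sqrt α := by
    have h1 : Real.sqrt 2 ≤ Real.sqrt α := Real.sqrt_le_sqrt hα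
    have h2 : (1.41:ℝ) ≤ Real.sqrt 2 := by
      have h3 := Real.sq_sqrt (by norm_num : (0:ℝ) ≤ 2)
      nlinarith [Real.sqrt_nonneg 2]
    linarith
  have hss : Real.sqrt α * Real.sqrt α = α := Real.mul_self_sqrt hα0.le
  have hsum2 : Summable (fun n : ℕ => ((1:ℝ) / (2 * n + 1)) ^ (α + 1)) :=
    summable_odd (by linarith)
  have hS2 : 1 ≤ S2 := by
    have h0 := Summable.le_tsum hsum2 0 (fun i _ => Real.rpow_nonneg (by positivity) _)
    have h00 : ((1:ℝ) / (2 * ((0:ℕ):ℝ) + 1)) ^ (α + 1) = 1 := by norm_num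
    rw [hS2def]
    rw [h00] at h0
    exact h0
  have hsum1 : Summable (fun n : ℕ => ((1:ℝ) / (2 * n + 1)) ^ α) := summable_odd hα
  set T := (3:ℝ) ^ (2 - α) with hTdef
  have hT0 : 0 < T := Real.rpow_pos_of_pos (by norm_num) _
  have hS1 : S1 ≤ 1 + π ^ 2 / 24 * T := by
    rw [hS1def, Summable.tsum_eq_zero_add hsum1]
    have h00 : ((1:ℝ) / (2 * ((0:ℕ):ℝ) + 1)) ^ α = 1 := by norm_num
    rw [h00]
    have hbound : ∀ n : ℕ, ((1:ℝ) / (2 * ((n + 1 : ℕ):ℝ) + 1)) ^ α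
        ≤ T / 4 * ((1:ℝ) / ((n:ℝ) + 1)) ^ (2:ℕ) := by
      intro n
      have hn0 : (0:ℝ) ≤ (n:ℝ) := Nat.cast_nonneg n
      push_cast
      have hx0 : (0:ℝ) < 1 / (2 * ((n:ℝ) + 1) + 1) := by positivity
      have hx3 : (1:ℝ) / (2 * ((n:ℝ) + 1) + 1) ≤ 1 / 3 :=
        one_div_le_one_div_of_le (by norm_num) (by linarith)
      have hsplit : ((1:ℝ) / (2 * ((n:ℝ) + 1) + 1)) ^ α
          = ((1:ℝ) / (2 * ((n:ℝ) + 1) + 1)) ^ (α - 2)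
            * ((1:ℝ) / (2 * ((n:ℝ) + 1) + 1)) ^ (2:ℝ) := by
        rw [← Real.rpow_add hx0]; norm_num
      have h13 : ((1:ℝ) / 3) ^ (α - 2) = T := by
        rw [hTdef, show (2 - α) = -(α - 2) from by ring,
          Real.rpow_neg (by norm_num : (0:ℝ) ≤ 3), one_div,
          Real.inv_rpow (by norm_num : (0:ℝ) ≤ 3)]
      have h1 : ((1:ℝ) / (2 * ((n:ℝ) + 1) + 1)) ^ (α - 2) ≤ T := by
        rw [← h13]
        exact Real.rpow_le_rpow hx0.le hx3 (by linarith)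
      have h2 : ((1:ℝ) / (2 * ((n:ℝ) + 1) + 1)) ^ (2:ℝ)
          ≤ 1 / 4 * ((1:ℝ) / ((n:ℝ) + 1)) ^ (2:ℕ) := by
        rw [show (2:ℝ) = ((2:ℕ):ℝ) from by norm_num, Real.rpow_natCast]
        have hle : (1:ℝ) / (2 * ((n:ℝ) + 1) + 1) ≤ 1 / (2 * ((n:ℝ) + 1)) :=
          one_div_le_one_div_of_le (by positivity) (by linarith)
        calc ((1:ℝ) / (2 * ((n:ℝ) + 1) + 1)) ^ (2:ℕ)
            ≤ ((1:ℝ) / (2 * ((n:ℝ) + 1))) ^ (2:ℕ) := pow_le_pow_left₀ hx0.le hle 2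
          _ = 1 / 4 * ((1:ℝ) / ((n:ℝ) + 1)) ^ (2:ℕ) := by
              field_simp; ring
      calc ((1:ℝ) / (2 * ((n:ℝ) + 1) + 1)) ^ α
          = ((1:ℝ) / (2 * ((n:ℝ) + 1) + 1)) ^ (α - 2)
            * ((1:ℝ) / (2 * ((n:ℝ) + 1) + 1)) ^ (2:ℝ) := hsplit
        _ ≤ T * (1 / 4 * ((1:ℝ) / ((n:ℝ) + 1)) ^ (2:ℕ)) :=
            mul_le_mul h1 h2 (Real.rpow_nonneg hx0.le _) hT0.le
        _ = T / 4 * ((1:ℝ) / ((n:ℝ) + 1)) ^ (2:ℕ) := by ring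
    have hsumf' : Summable (fun n : ℕ => ((1:ℝ) / (2 * ((n + 1 : ℕ):ℝ) + 1)) ^ α) :=
      (summable_nat_add_iff 1).mpr hsum1
    have hsummg : Summable (fun n : ℕ => T / 4 * ((1:ℝ) / ((n:ℝ) + 1)) ^ (2:ℕ)) :=
      summable_basel.mul_left _
    have htail := Summable.tsum_le_tsum hbound hsumf' hsummg
    rw [tsum_mul_left, basel_shift] at htail
    have : T / 4 * (π ^ 2 / 6) = π ^ 2 / 24 * T := by ring
    linarith [htail]
  have hlog3 : (1:ℝ) ≤ Real.log 3 := by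
    rw [Real.le_log_iff_exp_le (by norm_num : (0:ℝ) < 3)]
    calc Real.exp 1 ≤ 2.7182818286 := le_of_lt Real.exp_one_lt_d9
      _ ≤ 3 := by norm_num
  have h3exp : (1:ℝ) + (α - 2) ≤ (3:ℝ) ^ (α - 2) := by
    rw [Real.rpow_def_of_pos (by norm_num : (0:ℝ) < 3)]
    have h := Real.add_one_le_exp (Real.log 3 * (α - 2))
    nlinarith [h]
  have h5 : (1 + 2 * α) * T ≤ 5 := by
    have hpos3 : (0:ℝ) < (3:ℝ) ^ (α - 2) := Real.rpow_pos_of_pos (by norm_num) _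
    have hTinv : T * (3:ℝ) ^ (α - 2) = 1 := by
      rw [hTdef, ← Real.rpow_add (by norm_num : (0:ℝ) < 3)]
      norm_num
    have h51 : 1 + 2 * α ≤ 5 * (3:ℝ) ^ (α - 2) := by nlinarith [h3exp]
    calc (1 + 2 * α) * T ≤ (5 * (3:ℝ) ^ (α - 2)) * T :=
        mul_le_mul_of_nonneg_right h51 hT0.le
      _ = 5 * (T * (3:ℝ) ^ (α - 2)) := by ring
      _ = 5 := by rw [hTinv]; ring
  have hπ2 : π ^ 2 ≤ 10 := by nlinarith [Real.pi_lt_d2, Real.pi_gt_three]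
  have hq : S1 * (1 + 2 * α) ≤ 2 * α * (1 + 2 / Real.sqrt α) := by
    have hexp : 2 * α * (1 + 2 / Real.sqrt α) = 2 * α + 4 * Real.sqrt α := by
      field_simp
      linear_combination (-4) * hss
    rw [hexp]
    have hA : S1 * (1 + 2 * α) ≤ (1 + π ^ 2 / 24 * T) * (1 + 2 * α) :=
      mul_le_mul_of_nonneg_right hS1 (by linarith)
    have hB : π ^ 2 / 24 * ((1 + 2 * α) * T) ≤ π ^ 2 / 24 * 5 :=
      mul_le_mul_of_nonneg_left h5 (by positivity)
    nlinarith [hA, hB, hπ2, hs141]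
  rw [hC1, hC2, hG1]
  conv_rhs => rw [div_mul_eq_mul_div]
  rw [le_div_iff₀ (by linarith : (0:ℝ) < 1 + 2 * α)]
  calc (1 / 2) * (2 * Real.Gamma α * S1) * (1 + 2 * α)
      = Real.Gamma α * (S1 * (1 + 2 * α)) := by ring
    _ ≤ Real.Gamma α * (2 * α * (1 + 2 / Real.sqrt α)) :=
        mul_le_mul_of_nonneg_left hq hΓ.le
    _ = 2 * (α * Real.Gamma α) * 1 * (1 + 2 / Real.sqrt α) := by ring
    _ ≤ 2 * (α * Real.Gamma α) * S2 * (1 + 2 / Real.sqrt α) := by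
        apply mul_le_mul_of_nonneg_right _ (by positivity)
        apply mul_le_mul_of_nonneg_left hS2 (by positivity)
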